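/- Let E be a real vector space, b a symmetric positive semidefinite bilinear form on E, a_h a symmetric bilinear form on E, and V_h ⊆ E a finite-dimensional linear subspace possessing a basis u_1, …, u_N with b(u_i, u_j) = δ_{ij} and such that a_h(u_j, v) = λ_j·b(u_j, v) for all v ∈ V_h, where λ_1, …, λ_N ∈ ℝ. Let λ > 0, d > 0 and ℓ ∈ {1, …, N} satisfy λ ≤ d·|λ_j − λ| for all j ≠ ℓ. Let u ∈ E with b(u,u) = 1, and let P ∈ V_h satisfy a_h(P, v) = λ·b(u, v) for all v ∈ V_h. If β := b(P, u_ℓ) ≥ 0, then b(u − u_ℓ, u − u_ℓ)^{1/2} ≤ 2·(1 + d)·b(u − P, u − P)^{1/2}. -/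

import Mathlib

section Helpers
variable {E : Type*} [AddCommGroup E] [Module ℝ E]
variable (b : E →ₗ[ℝ] E →ₗ[ℝ] ℝ)

lemma bform_cs (hb_symm : ∀ x y, b x y = b y x) (hb_pos : ∀ x, 0 ≤ b x x)
    (x y : E) : (b x y) ^ 2 ≤ b x x * b y y := by
  have key : ∀ t : ℝ, 0 ≤ b y y * (t * t) + (2 * b x y) * t + b x x := by
    intro t
    have h := hb_pos (x + t • y)
    have hexp : b (x + t • y) (x + t • y)
        = b y y * (t * t) + (2 * b x y) * t + b x x := by
      simp only [map_add, map_smul, LinearMap.add_apply, LinearMap.smul_apply,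
        smul_eq_mul, hb_symm y x]
      ring
    linarith [hexp ▸ h]
  have hdis := discrim_le_zero key
  unfold discrim at hdis
  nlinarith [hdis]

lemma bform_inner_le (hb_symm : ∀ x y, b x y = b y x) (hb_pos : ∀ x, 0 ≤ b x x)
    (x y : E) : b x y ≤ Real.sqrt (b x x) * Real.sqrt (b y y) := by
  have h := bform_cs b hb_symm hb_pos x y
  have h1 : b x y ≤ Real.sqrt ((b x y) ^ 2) := by
    rw [Real.sqrt_sq_eq_abs]; exact le_abs_self _
  calc b x y ≤ Real.sqrt ((b x y) ^ 2) := h1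
    _ ≤ Real.sqrt (b x x * b y y) := Real.sqrt_le_sqrt h
    _ = Real.sqrt (b x x) * Real.sqrt (b y y) := Real.sqrt_mul (hb_pos x) _

lemma bform_tri (hb_symm : ∀ x y, b x y = b y x) (hb_pos : ∀ x, 0 ≤ b x x)
    (x y : E) : Real.sqrt (b (x + y) (x + y)) ≤ Real.sqrt (b x x) + Real.sqrt (b y y) := by
  have hxy := bform_inner_le b hb_symm hb_pos x y
  have hexp : b (x + y) (x + y) = b x x + 2 * b x y + b y y := by
    simp only [map_add, LinearMap.add_apply, hb_symm y x]; ring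
  have hsq : b (x + y) (x + y) ≤ (Real.sqrt (b x x) + Real.sqrt (b y y)) ^ 2 := by
    rw [hexp]
    have h1 := Real.sq_sqrt (hb_pos x)
    have h2 := Real.sq_sqrt (hb_pos y)
    nlinarith
  calc Real.sqrt (b (x + y) (x + y))
      ≤ Real.sqrt ((Real.sqrt (b x x) + Real.sqrt (b y y)) ^ 2) := Real.sqrt_le_sqrt hsq
    _ = Real.sqrt (b x x) + Real.sqrt (b y y) := by
        rw [Real.sqrt_sq (by positivity)]

lemma bform_smul (x : E) (t : ℝ) :
    Real.sqrt (b (t • x) (t • x)) = |t| * Real.sqrt (b x x) := by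
  have : b (t • x) (t • x) = t ^ 2 * b x x := by
    simp only [map_smul, LinearMap.smul_apply, smul_eq_mul]; ring
  rw [this, Real.sqrt_mul (sq_nonneg t), Real.sqrt_sq_eq_abs]

lemma bform_bessel (hb_symm : ∀ x y, b x y = b y x) (hb_pos : ∀ x, 0 ≤ b x x)
    {N : ℕ} (v : Fin N → E)
    (horth : ∀ i j, b (v i) (v j) = if i = j then 1 else 0)
    (z : E) (s : Finset (Fin N)) :
    ∑ j ∈ s, (b z (v j)) ^ 2 ≤ b z z := by
  set c : Fin N → ℝ := fun j => b z (v j) with hc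
  have h := hb_pos (z - ∑ j ∈ s, c j • v j)
  have h1 : ∀ w : E, b w (∑ j ∈ s, c j • v j) = ∑ j ∈ s, c j * b w (v j) := by
    intro w
    rw [map_sum]
    exact Finset.sum_congr rfl fun j _ => by simp
  have h2 : b (∑ j ∈ s, c j • v j) (∑ j ∈ s, c j • v j) = ∑ j ∈ s, (c j) ^ 2 := by
    rw [h1]
    refine Finset.sum_congr rfl fun j hj => ?_
    have : b (∑ i ∈ s, c i • v i) (v j) = ∑ i ∈ s, c i * b (v i) (v j) := by
      rw [map_sum, LinearMap.sum_apply]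
      exact Finset.sum_congr rfl fun i _ => by simp
    rw [this]
    simp only [horth, mul_ite, mul_one, mul_zero]
    rw [Finset.sum_ite_eq' s j c]
    simp [hj]; ring
  have hexp : b (z - ∑ j ∈ s, c j • v j) (z - ∑ j ∈ s, c j • v j)
      = b z z - ∑ j ∈ s, (c j) ^ 2 := by
    simp only [map_sub, LinearMap.sub_apply]
    rw [h1 z, h2, hb_symm (∑ j ∈ s, c j • v j) z, h1 z]
    have : ∑ j ∈ s, c j * b z (v j) = ∑ j ∈ s, (c j) ^ 2 := by
      refine Finset.sum_congr rfl fun j _ => by simp only [hc]; ring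
    rw [this]; ring
  linarith [hexp ▸ h]

end Helpers

section Main
variable {E : Type*} [AddCommGroup E] [Module ℝ E]
variable (b : E →ₗ[ℝ] E →ₗ[ℝ] ℝ)

lemma bform_coef {N : ℕ} (v : Fin N → E)
    (horth : ∀ i j, b (v i) (v j) = if i = j then 1 else 0)
    (a : Fin N → ℝ) (s : Finset (Fin N)) {j : Fin N} (hj : j ∈ s) :
    b (∑ i ∈ s, a i • v i) (v j) = a j := by
  rw [map_sum, LinearMap.sum_apply]
  have : ∀ i ∈ s, (b (a i • v i)) (v j) = if i = j then a i else 0 := by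
    intro i _
    simp [horth i j, mul_ite]
  rw [Finset.sum_congr rfl this, Finset.sum_ite_eq' s j a, if_pos hj]

lemma bform_sum_sq {N : ℕ} (v : Fin N → E)
    (horth : ∀ i j, b (v i) (v j) = if i = j then 1 else 0)
    (a : Fin N → ℝ) (s : Finset (Fin N)) :
    b (∑ i ∈ s, a i • v i) (∑ i ∈ s, a i • v i) = ∑ i ∈ s, (a i) ^ 2 := by
  rw [map_sum (b _)]
  refine Finset.sum_congr rfl fun j hj => ?_
  rw [map_smul, smul_eq_mul, bform_coef b v horth a s hj]
  ring

end Main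

/-- Abstract content of Theorem 3.1: with a `b`-orthonormal basis `uu` of the discrete
space `V_h` of discrete eigenfunctions, eigenvalue separation, a normalized `u`, a
quasi-Ritz projection `P` of `u` and `b(P, uu ℓ) ≥ 0`, the `b`-seminorm error of the
discrete eigenfunction is controlled by that of the projection. -/
theorem abstract_L2_eigenfunction_estimate
    {E : Type*} [AddCommGroup E] [Module ℝ E]
    (b ah : E →ₗ[ℝ] E →ₗ[ℝ] ℝ)
    (hb_symm : ∀ x y, b x y = b y x) (hb_pos : ∀ x, 0 ≤ b x x)
    (hah_symm : ∀ x y, ah x y = ah y x)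
    (Vh : Submodule ℝ E) (N : ℕ) (uu : Fin N → E)
    (huu_mem : ∀ j, uu j ∈ Vh)
    (huu_span : Vh = Submodule.span ℝ (Set.range uu))
    (huu_orth : ∀ i j, b (uu i) (uu j) = if i = j then 1 else 0)
    (lams : Fin N → ℝ)
    (heig : ∀ j, ∀ v ∈ Vh, ah (uu j) v = lams j * b (uu j) v)
    (lam d : ℝ) (hlam : 0 < lam) (hd : 0 < d) (l : Fin N)
    (hsep : ∀ j, j ≠ l → lam ≤ d * |lams j - lam|)
    (u : E) (hu_norm : b u u = 1)
    (P : E) (hP : P ∈ Vh)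
    (hPdef : ∀ v ∈ Vh, ah P v = lam * b u v)
    (hβ : 0 ≤ b P (uu l)) :
    Real.sqrt (b (u - uu l) (u - uu l))
      ≤ 2 * (1 + d) * Real.sqrt (b (u - P) (u - P)) := by
  -- coefficients of P in the orthonormal basis
  have hPmem : P ∈ Submodule.span ℝ (Set.range uu) := huu_span ▸ hP
  obtain ⟨a, ha⟩ := (Submodule.mem_span_range_iff_exists_fun ℝ).mp hPmem
  have hcoef : ∀ j, b P (uu j) = a j := fun j => by
    rw [← ha]; exact bform_coef b uu huu_orth a Finset.univ (Finset.mem_univ j)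
  set β : ℝ := a l with hβdef
  have hβ0 : 0 ≤ β := by rw [hβdef, ← hcoef l]; exact hβ
  set Q : E := P - β • uu l with hQdef
  set e : E := u - P with hedef
  set Enorm : ℝ := Real.sqrt (b e e) with hEdef
  have hE0 : 0 ≤ Enorm := Real.sqrt_nonneg _
  -- coefficient bound for j ≠ l
  have haj : ∀ j ∈ Finset.univ.erase l, (a j) ^ 2 ≤ d ^ 2 * (b e (uu j)) ^ 2 := by
    intro j hj
    have hne : j ≠ l := (Finset.mem_erase.mp hj).1
    have hsepj := hsep j hne
    have h1 : lam * b u (uu j) = lams j * a j := by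
      have e1 := hPdef (uu j) (huu_mem j)
      have e2 := heig j P hP
      rw [hah_symm] at e1
      rw [e2, hb_symm (uu j) P, hcoef j] at e1
      linarith
    have h2 : lam * b e (uu j) = (lams j - lam) * a j := by
      have : b e (uu j) = b u (uu j) - a j := by
        rw [hedef, map_sub, LinearMap.sub_apply, hcoef j]
      rw [this]; nlinarith [h1]
    have hlam2 : lam ^ 2 ≤ d ^ 2 * (lams j - lam) ^ 2 := by
      nlinarith [hsepj, hlam, sq_abs (lams j - lam), abs_nonneg (lams j - lam)]
    have hΔ2 : 0 < (lams j - lam) ^ 2 := by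
      nlinarith [hsepj, hlam, sq_abs (lams j - lam), abs_nonneg (lams j - lam)]
    have h2sq : (lam * b e (uu j)) ^ 2 = ((lams j - lam) * a j) ^ 2 := by rw [h2]
    nlinarith [h2sq, hlam2, hΔ2, sq_nonneg (b e (uu j)), sq_nonneg (a j),
      mul_nonneg (sq_nonneg d) (sq_nonneg (b e (uu j)))]
  -- Bessel and the bound on Q
  have hbessel := bform_bessel b hb_symm hb_pos uu huu_orth e (Finset.univ.erase l)
  have hQrep : Q = ∑ j ∈ Finset.univ.erase l, a j • uu j := by
    have := Finset.sum_erase_add Finset.univ (fun j => a j • uu j) (Finset.mem_univ l)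
    rw [hQdef, hβdef, ← ha, ← this]
    abel
  have hQQ : b Q Q = ∑ j ∈ Finset.univ.erase l, (a j) ^ 2 := by
    rw [hQrep]; exact bform_sum_sq b uu huu_orth a _
  have hQbound : b Q Q ≤ d ^ 2 * b e e := by
    rw [hQQ]
    calc ∑ j ∈ Finset.univ.erase l, (a j) ^ 2
        ≤ ∑ j ∈ Finset.univ.erase l, d ^ 2 * (b e (uu j)) ^ 2 :=
          Finset.sum_le_sum haj
      _ = d ^ 2 * ∑ j ∈ Finset.univ.erase l, (b e (uu j)) ^ 2 := by
          rw [Finset.mul_sum]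
      _ ≤ d ^ 2 * b e e := by
          exact mul_le_mul_of_nonneg_left hbessel (sq_nonneg d)
  have hQnorm : Real.sqrt (b Q Q) ≤ d * Enorm := by
    calc Real.sqrt (b Q Q) ≤ Real.sqrt (d ^ 2 * b e e) := Real.sqrt_le_sqrt hQbound
      _ = d * Enorm := by
          rw [Real.sqrt_mul (sq_nonneg d), Real.sqrt_sq hd.le, hEdef]
  -- norms of u, uu l, β • uu l
  have hu1 : Real.sqrt (b u u) = 1 := by rw [hu_norm, Real.sqrt_one]
  have hul1 : Real.sqrt (b (uu l) (uu l)) = 1 := by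
    rw [huu_orth l l, if_pos rfl, Real.sqrt_one]
  have hβnorm : Real.sqrt (b (β • uu l) (β • uu l)) = β := by
    rw [bform_smul b (uu l) β, hul1, mul_one, abs_of_nonneg hβ0]
  -- symmetry of the seminorm under negation
  have hneg : ∀ x y : E, b (x - y) (x - y) = b (y - x) (y - x) := by
    intro x y
    have : y - x = -(x - y) := by abel
    rw [this]; simp [map_neg]; ring
  -- triangle inequalities
  have t1 : Real.sqrt (b (u - uu l) (u - uu l))
      ≤ Real.sqrt (b (u - β • uu l) (u - β • uu l))
        + Real.sqrt (b (β • uu l - uu l) (β • uu l - uu l)) := by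
    have := bform_tri b hb_symm hb_pos (u - β • uu l) (β • uu l - uu l)
    rwa [sub_add_sub_cancel] at this
  have t2 : Real.sqrt (b (u - β • uu l) (u - β • uu l))
      ≤ Enorm + Real.sqrt (b Q Q) := by
    have := bform_tri b hb_symm hb_pos (u - P) (P - β • uu l)
    rwa [sub_add_sub_cancel, ← hedef, ← hQdef, ← hEdef] at this
  have t3 : Real.sqrt (b (β • uu l - uu l) (β • uu l - uu l)) = |β - 1| := by
    have : β • uu l - uu l = (β - 1) • uu l := by rw [sub_smul, one_smul]
    rw [this, bform_smul b (uu l) (β - 1), hul1, mul_one]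
  have t5 : Real.sqrt (b (β • uu l - u) (β • uu l - u))
      ≤ Real.sqrt (b Q Q) + Enorm := by
    have := bform_tri b hb_symm hb_pos (β • uu l - P) (P - u)
    rwa [sub_add_sub_cancel, hneg (β • uu l) P, ← hQdef, hneg P u, ← hedef, ← hEdef]
      at this
  have t4 : |β - 1| ≤ Real.sqrt (b (β • uu l - u) (β • uu l - u)) := by
    have tri1 := bform_tri b hb_symm hb_pos (β • uu l - u) u
    rw [sub_add_cancel, hβnorm, hu1] at tri1
    have tri2 := bform_tri b hb_symm hb_pos (u - β • uu l) (β • uu l)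
    rw [sub_add_cancel, hu1, hβnorm, hneg u (β • uu l)] at tri2
    rw [abs_sub_le_iff]
    constructor <;> linarith
  linarith [t1, t2, t3, t4, t5, hQnorm]
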